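/- Let L be a complete residuated lattice and Y a nonempty set. For L-sets A,B,M : Y → L let S(A,M) = ⨅_{y∈Y} (A(y) → M(y)) and ||A ⇒ B||_M = S(A,M) → S(B,M). Let T be a map assigning to each pair (A,B) of L-sets a degree T(A ⇒ B) ∈ L, let Mod(T) = {M : Y → L | T(A ⇒ B) ≤ ||A ⇒ B||_M for all A,B}, and let ||A ⇒ B||_T = ⨅_{M ∈ Mod(T)} ||A ⇒ B||_M. Then for all A,B,C : Y → L, ||A ⇒ B||_T ⊗ ||B ⇒ C||_T ≤ ||A ⇒ C||_T. -/
import Mathlib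


/-- A complete (integral commutative) residuated lattice: a complete lattice
with a commutative monoid operation `otimes` whose unit is the top element,
together with a residuum `rimp` satisfying the adjointness property. -/
class CompleteResiduatedLattice (L : Type*) extends CompleteLattice L where
  otimes : L → L → L
  rimp : L → L → L
  otimes_comm : ∀ a b : L, otimes a b = otimes b a
  otimes_assoc : ∀ a b c : L, otimes (otimes a b) c = otimes a (otimes b c)
  otimes_top : ∀ a : L, otimes a ⊤ = a
  adjoint : ∀ a b c : L, otimes a b ≤ c ↔ a ≤ rimp b c

open CompleteResiduatedLattice

local infixr:70 " ⊛ " => CompleteResiduatedLattice.otimes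

variable {L : Type*} [CompleteResiduatedLattice L] {Y : Type*}

/-- The degree `S(A,M)` to which the L-set `A` is included in the L-set `M`. -/
def Ssub (A M : Y → L) : L := ⨅ y, rimp (A y) (M y)

/-- The degree `||A ⇒ B||_M` to which the fuzzy attribute implication
`A ⇒ B` is true in the L-set `M`. -/
def faiDeg (A B M : Y → L) : L := rimp (Ssub A M) (Ssub B M)

/-- The set `Mod(T)` of all models of an L-set `T` of fuzzy attribute
implications. -/
def faiMod (T : (Y → L) → (Y → L) → L) : Set (Y → L) :=
  {M | ∀ A B, T A B ≤ faiDeg A B M}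

/-- The degree `||A ⇒ B||_T` to which `A ⇒ B` is semantically entailed
by `T`. -/
def faiDegT (T : (Y → L) → (Y → L) → L) (A B : Y → L) : L :=
  ⨅ M ∈ faiMod T, faiDeg A B M


section Aux
variable {L : Type*} [CompleteResiduatedLattice L]

lemma mp_le (a b : L) : (rimp a b) ⊛ a ≤ b := (adjoint _ _ _).mpr (le_refl _)

lemma otimes_mono {a b c d : L} (h1 : a ≤ b) (h2 : c ≤ d) : a ⊛ c ≤ b ⊛ d := by
  have hb : b ≤ rimp d (b ⊛ d) := (adjoint _ _ _).mp (le_refl _)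
  have h3 : a ⊛ d ≤ b ⊛ d := (adjoint _ _ _).mpr (le_trans h1 hb)
  have h4 : a ⊛ c ≤ a ⊛ d := by
    rw [otimes_comm a c, otimes_comm a d]
    exact (adjoint _ _ _).mpr (le_trans h2 ((adjoint _ _ _).mp (le_refl (d ⊛ a))))
  exact le_trans h4 h3

lemma rimp_trans (x y z : L) : (rimp x y) ⊛ (rimp y z) ≤ rimp x z := by
  rw [← adjoint, otimes_assoc]
  calc rimp x y ⊛ (rimp y z ⊛ x) = (rimp y z) ⊛ ((rimp x y) ⊛ x) := by
        rw [otimes_comm (rimp x y), otimes_assoc, otimes_comm x]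
    _ ≤ (rimp y z) ⊛ y := otimes_mono (le_refl _) (mp_le x y)
    _ ≤ z := mp_le y z

end Aux

/-- Semantic entailment of fuzzy attribute implications is `⊗`-transitive:
`||A ⇒ B||_T ⊗ ||B ⇒ C||_T ≤ ||A ⇒ C||_T`. -/
theorem stmt3 {L : Type*} [CompleteResiduatedLattice L] {Y : Type*} [Nonempty Y]
    (T : (Y → L) → (Y → L) → L) (A B C : Y → L) :
    faiDegT T A B ⊛ faiDegT T B C ≤ faiDegT T A C := by
  apply le_iInf₂
  intro M hM
  have h1 : faiDegT T A B ≤ faiDeg A B M := biInf_le _ hM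
  have h2 : faiDegT T B C ≤ faiDeg B C M := biInf_le _ hM
  exact le_trans (otimes_mono h1 h2) (rimp_trans _ _ _)
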